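/- Let n_p, n_nr, n_r be natural numbers and let P be a symmetric positive semidefinite real (n_p + n_nr + n_r) × (n_p + n_nr + n_r) matrix whose block partition corresponding to plant states x_p ∈ ℝ^{n_p}, non-resetting controller states x_nr ∈ ℝ^{n_nr} and resetting controller states x_r ∈ ℝ^{n_r} satisfies: the (resetting, plant) block equals β·C_p for some column vector β ∈ ℝ^{n_r} and row vector C_p ∈ ℝ^{1×n_p}, the (resetting, non-resetting) block is zero, and the (resetting, resetting) block P_ρ is positive semidefinite. Let γ ∈ ℝ with γ² ≤ 1 and let x = (x_p, x_nr, x_r) be a state at a reset instant, i.e., C_p·x_p = 0. Then the Lyapunov function V(x) = xᵀ P x does not increase under the reset jump x⁺ = (x_p, x_nr, γ·x_r): one has (x⁺)ᵀ P x⁺ ≤ xᵀ P x. -/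

import Mathlib

open Matrix

/-- Under the restricted Lyapunov condition of the quadratic stability theorem for
reset systems (the (resetting, plant) block of `P` equals `β·C_p`, the
(resetting, non-resetting) block vanishes, and the (resetting, resetting) block `P_ρ`
is positive semidefinite), the quadratic Lyapunov function `V(x) = xᵀ P x` does not
increase across a reset jump `x_r ↦ γ·x_r` (with `γ² ≤ 1`) occurring at a reset
instant, i.e. when `C_p·x_p = 0`. -/
theorem reset_jump_lyapunov_nonincreasing
    (n_p n_nr n_r : ℕ)
    (P : Matrix (Fin n_p ⊕ Fin n_nr ⊕ Fin n_r) (Fin n_p ⊕ Fin n_nr ⊕ Fin n_r) ℝ)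
    (hPsymm : P.IsSymm) (hP : P.PosSemidef)
    (β : Fin n_r → ℝ) (Cp : Fin n_p → ℝ)
    (hblock_p : ∀ (i : Fin n_r) (j : Fin n_p),
      P (Sum.inr (Sum.inr i)) (Sum.inl j) = β i * Cp j)
    (hblock_nr : ∀ (i : Fin n_r) (j : Fin n_nr),
      P (Sum.inr (Sum.inr i)) (Sum.inr (Sum.inl j)) = 0)
    (hPρ : (Matrix.of fun i j : Fin n_r =>
      P (Sum.inr (Sum.inr i)) (Sum.inr (Sum.inr j))).PosSemidef)
    (γ : ℝ) (hγ : γ ^ 2 ≤ 1)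
    (x : (Fin n_p ⊕ Fin n_nr ⊕ Fin n_r) → ℝ)
    (hreset : ∑ j : Fin n_p, Cp j * x (Sum.inl j) = 0) :
    (Sum.elim (fun i => x (Sum.inl i))
        (Sum.elim (fun i => x (Sum.inr (Sum.inl i)))
          (fun i => γ * x (Sum.inr (Sum.inr i))))) ⬝ᵥ
      P.mulVec (Sum.elim (fun i => x (Sum.inl i))
        (Sum.elim (fun i => x (Sum.inr (Sum.inl i)))
          (fun i => γ * x (Sum.inr (Sum.inr i))))) ≤
    x ⬝ᵥ P.mulVec x := by
  classical
  set c : Fin n_r → ℝ := fun i => x (Sum.inr (Sum.inr i)) with hc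
  set z : (Fin n_p ⊕ Fin n_nr ⊕ Fin n_r) → ℝ :=
    Sum.elim (fun _ => 0) (Sum.elim (fun _ => 0) c) with hz
  set Pρ : Matrix (Fin n_r) (Fin n_r) ℝ :=
    Matrix.of fun i j : Fin n_r => P (Sum.inr (Sum.inr i)) (Sum.inr (Sum.inr j)) with hPr
  have hyx : (Sum.elim (fun i => x (Sum.inl i))
      (Sum.elim (fun i => x (Sum.inr (Sum.inl i)))
        (fun i => γ * x (Sum.inr (Sum.inr i)))))
      = x + (γ - 1) • z := by
    funext i
    rcases i with i | i | i <;> simp [hz, hc] <;> ring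
  have key : ∀ w : (Fin n_p ⊕ Fin n_nr ⊕ Fin n_r) → ℝ,
      (∑ j : Fin n_p, Cp j * w (Sum.inl j)) = 0 →
      z ⬝ᵥ P *ᵥ w = c ⬝ᵥ Pρ *ᵥ (fun j => w (Sum.inr (Sum.inr j))) := by
    intro w hw
    have hfac : ∀ i : Fin n_r,
        ∑ j : Fin n_p, β i * Cp j * w (Sum.inl j)
          = β i * ∑ j : Fin n_p, Cp j * w (Sum.inl j) := by
      intro i
      rw [Finset.mul_sum]
      exact Finset.sum_congr rfl fun j _ => by ring
    simp [dotProduct, mulVec, Fintype.sum_sum_type, hz, hblock_p, hblock_nr,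
      mul_add, Finset.sum_add_distrib, hfac, hw, hPr]
  have hq : 0 ≤ c ⬝ᵥ Pρ *ᵥ c := by
    have := hPρ.dotProduct_mulVec_nonneg c
    simpa [hPr] using this
  have hz0 : (∑ j : Fin n_p, Cp j * z (Sum.inl j)) = 0 := by simp [hz]
  have e1 : z ⬝ᵥ P *ᵥ x = c ⬝ᵥ Pρ *ᵥ c := by
    have := key x hreset
    simpa [hc] using this
  have e2 : z ⬝ᵥ P *ᵥ z = c ⬝ᵥ Pρ *ᵥ c := by
    have := key z hz0
    simpa [hz] using this
  have e3 : x ⬝ᵥ P *ᵥ z = z ⬝ᵥ P *ᵥ x := by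
    rw [Matrix.dotProduct_mulVec, ← Matrix.mulVec_transpose, hPsymm.eq, dotProduct_comm]
  rw [hyx]
  have expand : (x + (γ - 1) • z) ⬝ᵥ P *ᵥ (x + (γ - 1) • z)
      = x ⬝ᵥ P *ᵥ x + (γ - 1) * (x ⬝ᵥ P *ᵥ z) + (γ - 1) * (z ⬝ᵥ P *ᵥ x)
        + (γ - 1) * ((γ - 1) * (z ⬝ᵥ P *ᵥ z)) := by
    simp [Matrix.mulVec_add, Matrix.mulVec_smul, dotProduct_add, add_dotProduct,
      dotProduct_smul, smul_dotProduct, smul_eq_mul]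
    ring
  rw [expand, e3, e1, e2]
  nlinarith [hq, hγ]
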